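/- For each n divisible by 4, writing j = n/4 and m = ⌊j/3⌋, there exist unique complex numbers a_0, …, a_m such that the polynomial Σ_{i=0}^m a_i f^{j−3i} g^i, with f = X^4+8XY^3 and g = Y^3(X^3−Y^3)^3, has the form X^n + Σ_{i=m+1}^{n/3} A*_{3i} X^{n−3i} Y^{3i}. -/

import Mathlib

open MvPolynomial

noncomputable section ExtremalAux3

/-- Evaluation at `X 0 := 1`, `X 1 := Polynomial.X`. -/
noncomputable def ev3 : MvPolynomial (Fin 2) ℂ →+* Polynomial ℂ :=
  eval₂Hom Polynomial.C ![1, Polynomial.X]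

lemma degree_fin2 (b : Fin 2 →₀ ℕ) : b.degree = b 0 + b 1 := by
  rw [Finsupp.degree_apply, Finset.sum_subset (Finset.subset_univ _)
    (fun i _ hi => Finsupp.notMem_support_iff.mp hi), Fin.sum_univ_two]

lemma coeff_of_homog (p : MvPolynomial (Fin 2) ℂ) (N d : ℕ) (hp : p.IsHomogeneous N)
    (hd : d ≤ N) :
    p.coeff (Finsupp.single 0 (N - d) + Finsupp.single 1 d) = (ev3 p).coeff d := by
  set μ : Fin 2 →₀ ℕ := Finsupp.single 0 (N - d) + Finsupp.single 1 d with hμ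
  have hμ0 : μ 0 = N - d := by simp [hμ, Finsupp.single_apply]
  have hμ1 : μ 1 = d := by simp [hμ, Finsupp.single_apply]
  have hev : ev3 p = ∑ mo ∈ p.support, Polynomial.C (p.coeff mo) * Polynomial.X ^ (mo 1) := by
    show eval₂ Polynomial.C ![1, Polynomial.X] p = _
    rw [eval₂_eq']
    refine Finset.sum_congr rfl fun mo _ => ?_
    rw [Fin.prod_univ_two]
    simp
  rw [hev, Polynomial.finset_sum_coeff]
  simp only [Polynomial.coeff_C_mul, Polynomial.coeff_X_pow]
  rw [Finset.sum_eq_single μ]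
  · simp [hμ1]
  · intro b hb hbμ
    by_cases h1 : b 1 = d
    · exfalso
      apply hbμ
      have hbdeg : b.degree = N := by
        by_contra h
        exact (mem_support_iff.mp hb) (hp.coeff_eq_zero h)
      rw [degree_fin2] at hbdeg
      ext t
      fin_cases t
      · show b 0 = μ 0
        rw [hμ0]; omega
      · show b 1 = μ 1
        rw [hμ1]; exact h1
    · rw [if_neg (fun h => h1 h.symm), mul_zero]
  · intro h
    simp [notMem_support_iff.mp h]

/-- The univariate polynomial `Q_k = (1+8X³)^{j-3k} (X³(1-X³)³)^k`. -/
noncomputable def Qk (j k : ℕ) : Polynomial ℂ :=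
  (1 + 8 * Polynomial.X ^ 3) ^ (j - 3 * k) *
    (Polynomial.X ^ 3 * (1 - Polynomial.X ^ 3) ^ 3) ^ k

lemma Qk_coeff_lt (j k d : ℕ) (hd : d < 3 * k) : (Qk j k).coeff d = 0 := by
  have hdvd : (Polynomial.X : Polynomial ℂ) ^ (3 * k) ∣ Qk j k := by
    unfold Qk
    rw [mul_pow, pow_mul]
    exact Dvd.dvd.mul_left (Dvd.dvd.mul_right dvd_rfl _) _
  exact Polynomial.X_pow_dvd_iff.mp hdvd d hd

lemma Qk_coeff_self (j k : ℕ) : (Qk j k).coeff (3 * k) = 1 := by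
  unfold Qk
  rw [mul_pow, ← pow_mul, mul_left_comm, Polynomial.coeff_X_pow_mul', if_pos le_rfl,
    Nat.sub_self, Polynomial.coeff_zero_eq_eval_zero]
  simp

lemma fg_homog (j k : ℕ) (hk : 3 * k ≤ j) :
    ((((X 0 : MvPolynomial (Fin 2) ℂ) ^ 4 + 8 * X 0 * X 1 ^ 3) ^ (j - 3 * k)) *
      (((X 1 : MvPolynomial (Fin 2) ℂ) ^ 3 * (X 0 ^ 3 - X 1 ^ 3) ^ 3) ^ k)).IsHomogeneous
      (4 * j) := by
  have h8 : (8 : MvPolynomial (Fin 2) ℂ) = C (8 : ℂ) := by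
    simp [map_ofNat]
  have hf : (((X 0 : MvPolynomial (Fin 2) ℂ) ^ 4 + 8 * X 0 * X 1 ^ 3)).IsHomogeneous 4 := by
    apply IsHomogeneous.add
    · simpa using (isHomogeneous_X ℂ (0 : Fin 2)).pow 4
    · rw [h8]
      have := ((isHomogeneous_C (Fin 2) (8 : ℂ)).mul (isHomogeneous_X ℂ (0 : Fin 2))).mul
        ((isHomogeneous_X ℂ (1 : Fin 2)).pow 3)
      simpa using this
  have hg : (((X 1 : MvPolynomial (Fin 2) ℂ) ^ 3 * (X 0 ^ 3 - X 1 ^ 3) ^ 3)).IsHomogeneous 12 := by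
    have := ((isHomogeneous_X ℂ (1 : Fin 2)).pow 3).mul
      ((((isHomogeneous_X ℂ (0 : Fin 2)).pow 3).sub ((isHomogeneous_X ℂ (1 : Fin 2)).pow 3)).pow 3)
    simpa using this
  have := (hf.pow (j - 3 * k)).mul (hg.pow k)
  have hdeg : 4 * (j - 3 * k) + 12 * k = 4 * j := by omega
  rwa [hdeg] at this

lemma ev3_fg (j k : ℕ) :
    ev3 ((((X 0 : MvPolynomial (Fin 2) ℂ) ^ 4 + 8 * X 0 * X 1 ^ 3) ^ (j - 3 * k)) *
      (((X 1 : MvPolynomial (Fin 2) ℂ) ^ 3 * (X 0 ^ 3 - X 1 ^ 3) ^ 3) ^ k)) = Qk j k := by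
  unfold Qk
  simp only [map_mul, map_pow, map_add, map_sub, map_ofNat, ev3, eval₂Hom_X']
  norm_num [Matrix.cons_val_zero, Matrix.cons_val_one]

end ExtremalAux3

/-- For each `n` divisible by 4, with `j = n/4` and `m = ⌊j/3⌋ = n/12`, there exist
unique complex numbers `a_0, …, a_m` such that
`∑ i, a_i f^(j-3i) g^i` (with `f = X^4 + 8XY^3`, `g = Y^3(X^3-Y^3)^3`) has the form
`X^n + ∑_{i=m+1}^{n/3} A*_{3i} X^(n-3i) Y^(3i)`, i.e. its coefficient of `X^n` is 1 and
its coefficients of `X^(n-3i) Y^(3i)` vanish for `1 ≤ i ≤ m`. -/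
theorem extremalWE3_existsUnique (n : ℕ) (hn : 4 ∣ n) :
    ∃! a : Fin (n / 12 + 1) → ℂ,
      (∑ i : Fin (n / 12 + 1),
          C (a i) * ((X 0 : MvPolynomial (Fin 2) ℂ) ^ 4 + 8 * X 0 * X 1 ^ 3) ^ (n / 4 - 3 * (i : ℕ))
            * ((X 1 : MvPolynomial (Fin 2) ℂ) ^ 3 * (X 0 ^ 3 - X 1 ^ 3) ^ 3) ^ (i : ℕ)).coeff
          (Finsupp.single 0 n) = 1 ∧
      ∀ i : ℕ, 1 ≤ i → i ≤ n / 12 →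
        (∑ i : Fin (n / 12 + 1),
          C (a i) * ((X 0 : MvPolynomial (Fin 2) ℂ) ^ 4 + 8 * X 0 * X 1 ^ 3) ^ (n / 4 - 3 * (i : ℕ))
            * ((X 1 : MvPolynomial (Fin 2) ℂ) ^ 3 * (X 0 ^ 3 - X 1 ^ 3) ^ 3) ^ (i : ℕ)).coeff
          (Finsupp.single 0 (n - 3 * i) + Finsupp.single 1 (3 * i)) = 0 := by
  set m := n / 12 with hm
  set j := n / 4 with hj
  have hn4 : n = 4 * j := by omega
  have hjm : 3 * m ≤ j := by omega
  -- the key coefficient computation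
  have key : ∀ (a : Fin (m + 1) → ℂ) (i : ℕ), i ≤ m →
      (∑ k : Fin (m + 1),
          C (a k) * ((X 0 : MvPolynomial (Fin 2) ℂ) ^ 4 + 8 * X 0 * X 1 ^ 3) ^ (j - 3 * (k : ℕ))
            * ((X 1 : MvPolynomial (Fin 2) ℂ) ^ 3 * (X 0 ^ 3 - X 1 ^ 3) ^ 3) ^ (k : ℕ)).coeff
          (Finsupp.single 0 (n - 3 * i) + Finsupp.single 1 (3 * i))
        = ∑ k : Fin (m + 1), a k * (Qk j (k : ℕ)).coeff (3 * i) := by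
    intro a i hi
    rw [MvPolynomial.coeff_sum]
    refine Finset.sum_congr rfl fun k _ => ?_
    have hk3 : 3 * (k : ℕ) ≤ j := by
      have := k.isLt
      omega
    have h3i : 3 * i ≤ n := by omega
    have hsub : n - 3 * i = 4 * j - 3 * i := by omega
    rw [mul_assoc, MvPolynomial.coeff_C_mul, hsub]
    rw [coeff_of_homog _ (4 * j) (3 * i) (fg_homog j k hk3) (by omega), ev3_fg]
  -- the lower-triangular matrix of the linear system
  set M : Matrix (Fin (m + 1)) (Fin (m + 1)) ℂ :=
    fun i k => (Qk j (k : ℕ)).coeff (3 * (i : ℕ)) with hM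
  have hMtri : M.BlockTriangular OrderDual.toDual := by
    intro i k hik
    have : (i : ℕ) < (k : ℕ) := hik
    exact Qk_coeff_lt j k (3 * i) (by omega)
  have hMdiag : ∀ i, M i i = 1 := fun i => Qk_coeff_self j i
  have hMdet : M.det = 1 := by
    rw [Matrix.det_of_lowerTriangular M hMtri]
    simp [hMdiag]
  have hMunit : IsUnit M := by
    rw [Matrix.isUnit_iff_isUnit_det, hMdet]
    exact isUnit_one
  set b : Fin (m + 1) → ℂ := fun i => if i = 0 then 1 else 0 with hb
  have hsys : ∃! a : Fin (m + 1) → ℂ, M.mulVec a = b := by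
    obtain ⟨a, ha⟩ := (Matrix.mulVec_surjective_iff_isUnit.mpr hMunit) b
    exact ⟨a, ha, fun a' ha' =>
      (Matrix.mulVec_injective_iff_isUnit.mpr hMunit) (ha'.trans ha.symm)⟩
  -- translate the system into the statement's conditions
  have equiv : ∀ a : Fin (m + 1) → ℂ,
      ((∑ k : Fin (m + 1),
          C (a k) * ((X 0 : MvPolynomial (Fin 2) ℂ) ^ 4 + 8 * X 0 * X 1 ^ 3) ^ (j - 3 * (k : ℕ))
            * ((X 1 : MvPolynomial (Fin 2) ℂ) ^ 3 * (X 0 ^ 3 - X 1 ^ 3) ^ 3) ^ (k : ℕ)).coeff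
          (Finsupp.single 0 n) = 1 ∧
        ∀ i : ℕ, 1 ≤ i → i ≤ m →
          (∑ k : Fin (m + 1),
            C (a k) * ((X 0 : MvPolynomial (Fin 2) ℂ) ^ 4 + 8 * X 0 * X 1 ^ 3) ^ (j - 3 * (k : ℕ))
              * ((X 1 : MvPolynomial (Fin 2) ℂ) ^ 3 * (X 0 ^ 3 - X 1 ^ 3) ^ 3) ^ (k : ℕ)).coeff
            (Finsupp.single 0 (n - 3 * i) + Finsupp.single 1 (3 * i)) = 0)
      ↔ M.mulVec a = b := by
    intro a
    have h0 : (Finsupp.single (0 : Fin 2) n : Fin 2 →₀ ℕ)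
        = Finsupp.single 0 (n - 3 * 0) + Finsupp.single 1 (3 * 0) := by
      simp
    have hrow : ∀ i : Fin (m + 1),
        M.mulVec a i = ∑ k : Fin (m + 1), a k * (Qk j (k : ℕ)).coeff (3 * (i : ℕ)) := by
      intro i
      simp only [Matrix.mulVec, dotProduct, hM]
      exact Finset.sum_congr rfl fun k _ => mul_comm _ _
    constructor
    · rintro ⟨h1, h2⟩
      funext i
      rw [hrow, ← key a (i : ℕ) (Nat.lt_succ_iff.mp i.isLt)]
      rcases eq_or_ne i 0 with rfl | hi
      · simp only [Fin.val_zero, Nat.mul_zero, Nat.sub_zero, Finsupp.single_zero, add_zero]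
        rw [h1]
        simp [hb]
      · have hi1 : 1 ≤ (i : ℕ) := by
          rcases Nat.eq_zero_or_pos (i : ℕ) with h | h
          · exact absurd (Fin.ext h) hi
          · exact h
        rw [h2 (i : ℕ) hi1 (Nat.lt_succ_iff.mp i.isLt)]
        simp [hb, hi]
    · intro hsol
      have hs : ∀ i : Fin (m + 1),
          (∑ k : Fin (m + 1), a k * (Qk j (k : ℕ)).coeff (3 * (i : ℕ))) = b i := by
        intro i
        rw [← hrow, hsol]
      constructor
      · rw [h0, key a 0 (Nat.zero_le _)]
        have := hs 0
        simp only [Fin.val_zero] at this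
        rw [this]
        simp [hb]
      · intro i h1i him
        rw [key a i him]
        have := hs ⟨i, by omega⟩
        simp only [Fin.val_mk] at this
        rw [this]
        have hne : (⟨i, by omega⟩ : Fin (m + 1)) ≠ 0 := by
          simp [Fin.ext_iff]
          omega
        simp [hb, hne]
  exact existsUnique_congr equiv |>.mpr hsys
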